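/- arXiv:2407.06522 — 4 statements merged into one kernel-verified Lean document; each statement's English description precedes it below -/
import Mathlib

section
/- For the symmetric coupled Gaussian (Student's t-type) density f(x) = (1/Z)(1 + κ(x/σ)²)^{-(1+κ)/(2κ)} with σ > 0, κ > 0 and Z = σ B(1/(2κ), 1/2)/√κ, the second moment of the normalized 3rd-power density equals σ²/3: (∫_{-∞}^∞ x² f(x)^3 dx)/(∫_{-∞}^∞ f(x)^3 dx) = σ²/3. -/
open MeasureTheory Set Real

open Filter Topology

lemma pos_base (b : ℝ) (hb : 0 < b) (x : ℝ) : (0:ℝ) < 1 + b * x ^ 2 := by positivity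

lemma integrable_base (b q : ℝ) (hb : 0 < b) (hq : 1/2 < q) :
    Integrable (fun x : ℝ => (1 + b * x ^ 2) ^ (-q)) := by
  have h2q : ((Module.finrank ℝ ℝ : ℕ) : ℝ) < 2 * q := by
    simp [Module.finrank_self]; linarith
  have base := integrable_rpow_neg_one_add_norm_sq (E := ℝ) (μ := volume) h2q
  set m : ℝ := min 1 b with hm
  have hm0 : 0 < m := lt_min one_pos hb
  refine (base.const_mul (m ^ (-q))).mono' ?_ ?_
  · exact ((continuous_const.add (continuous_const.mul (continuous_pow 2))).rpow_const
      (fun x => Or.inl (pos_base b hb x).ne')).aestronglyMeasurable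
  · filter_upwards with x
    have hpos := pos_base b hb x
    rw [Real.norm_of_nonneg (Real.rpow_nonneg hpos.le _)]
    have h1 : m * (1 + x ^ 2) ≤ 1 + b * x ^ 2 := by
      have h2 : m ≤ 1 := min_le_left _ _
      have h3 : m ≤ b := min_le_right _ _
      nlinarith [sq_nonneg x]
    have h4 : (0:ℝ) < m * (1 + x ^ 2) := by positivity
    calc (1 + b * x ^ 2) ^ (-q) ≤ (m * (1 + x ^ 2)) ^ (-q) :=
          Real.rpow_le_rpow_of_nonpos h4 h1 (by linarith)
      _ = m ^ (-q) * (1 + x ^ 2) ^ (-q) := Real.mul_rpow hm0.le (by positivity)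
      _ = m ^ (-q) * (1 + ‖x‖ ^ 2) ^ (-(2*q)/2) := by
          rw [Real.norm_eq_abs, sq_abs]; ring_nf

lemma integrable_sq (b p : ℝ) (hb : 0 < b) (hp : 3/2 < p) :
    Integrable (fun x : ℝ => x ^ 2 * (1 + b * x ^ 2) ^ (-p)) := by
  refine ((integrable_base b (p-1) hb (by linarith)).const_mul b⁻¹).mono' ?_ ?_
  · exact (continuous_pow 2 |>.mul
      ((continuous_const.add (continuous_const.mul (continuous_pow 2))).rpow_const
      (fun x => Or.inl (pos_base b hb x).ne'))).aestronglyMeasurable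
  · filter_upwards with x
    have hpos := pos_base b hb x
    rw [Real.norm_of_nonneg (by positivity)]
    have h1 : x ^ 2 ≤ b⁻¹ * (1 + b * x ^ 2) := by
      rw [mul_add, ← mul_assoc, inv_mul_cancel₀ hb.ne', one_mul]
      nlinarith [inv_pos.mpr hb]
    calc x ^ 2 * (1 + b * x ^ 2) ^ (-p)
        ≤ (b⁻¹ * (1 + b * x ^ 2)) * (1 + b * x ^ 2) ^ (-p) := by
          exact mul_le_mul_of_nonneg_right h1 (Real.rpow_nonneg hpos.le _)
      _ = b⁻¹ * ((1 + b * x ^ 2) ^ (1:ℝ) * (1 + b * x ^ 2) ^ (-p)) := by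
          rw [Real.rpow_one]; ring
      _ = b⁻¹ * (1 + b * x ^ 2) ^ (-(p-1)) := by
          rw [← Real.rpow_add hpos]; ring_nf

lemma tendstoAux (b p : ℝ) (hb : 0 < b) (hp : 3/2 < p) :
    Tendsto (fun x : ℝ => x * (1 + b * x ^ 2) ^ (1-p)) atTop (𝓝 0) := by
  have hlim : Tendsto (fun x : ℝ => b ^ (1-p) * x ^ (-(2*p-3))) atTop (𝓝 0) := by
    have := (tendsto_rpow_neg_atTop (by linarith : (0:ℝ) < 2*p-3)).const_mul (b ^ (1-p))
    simpa using this
  refine squeeze_zero' ?_ ?_ hlim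
  · filter_upwards [eventually_ge_atTop (1:ℝ)] with x hx
    have := pos_base b hb x
    positivity
  · filter_upwards [eventually_ge_atTop (1:ℝ)] with x hx
    have hx0 : (0:ℝ) < x := by linarith
    have hpos := pos_base b hb x
    have hbx : (0:ℝ) < b * x ^ 2 := by positivity
    have h1 : (1 + b * x ^ 2) ^ (1-p) ≤ (b * x ^ 2) ^ (1-p) :=
      Real.rpow_le_rpow_of_nonpos hbx (by linarith) (by linarith)
    calc x * (1 + b * x ^ 2) ^ (1-p) ≤ x * (b * x ^ 2) ^ (1-p) :=
          mul_le_mul_of_nonneg_left h1 hx0.le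
      _ = b ^ (1-p) * (x * (x ^ 2) ^ (1-p)) := by
          rw [Real.mul_rpow hb.le (by positivity)]; ring
      _ = b ^ (1-p) * x ^ (-(2*p-3)) := by
          congr 1
          rw [← Real.rpow_natCast x 2, ← Real.rpow_mul hx0.le]
          nth_rewrite 1 [← Real.rpow_one x]
          rw [← Real.rpow_add hx0]
          congr 1
          push_cast
          ring

lemma key (b p : ℝ) (hb : 0 < b) (hp : 3/2 < p) :
    ∫ x : ℝ, (1 + b * x ^ 2) ^ (-p) =
      ((2*p-3)*b) * ∫ x : ℝ, x ^ 2 * (1 + b * x ^ 2) ^ (-p) := by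
  set A : ℝ → ℝ := fun x => (1 + b * x ^ 2) ^ (-(p-1)) with hA
  set B : ℝ → ℝ := fun x => (2*(p-1)*b) * (x ^ 2 * (1 + b * x ^ 2) ^ (-p)) with hB
  have hIA : Integrable A := integrable_base b (p-1) hb (by linarith)
  have hIB : Integrable B := (integrable_sq b p hb hp).const_mul _
  have hderiv : ∀ x : ℝ, HasDerivAt (fun x : ℝ => x * (1 + b * x ^ 2) ^ (1-p))
      (A x - B x) x := by
    intro x
    have hpos := pos_base b hb x
    have h1 : HasDerivAt (fun x : ℝ => 1 + b * x ^ 2) (b * (2 * x ^ 1)) x :=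
      ((hasDerivAt_pow 2 x).const_mul b).const_add 1
    have h2 := h1.rpow_const (p := 1-p) (Or.inl hpos.ne')
    have h3 := (hasDerivAt_id x).mul h2
    convert h3 using 1
    · rfl
    · rfl
    · rfl
    have e1 : (1:ℝ) - p - 1 = -p := by ring
    have e2 : -(p - 1) = 1 - p := by ring
    rw [hA, hB, e2]
    simp only [e1, id_eq, pow_one]
    have e3 : (1 + b * x ^ 2) ^ (1-p) = (1 + b * x ^ 2) * (1 + b * x ^ 2) ^ (-p) := by
      nth_rewrite 2 [← Real.rpow_one (1 + b * x ^ 2)]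
      rw [← Real.rpow_add hpos]; ring_nf
    rw [e3]; ring
  have htop := tendstoAux b p hb hp
  have hbot : Tendsto (fun x : ℝ => x * (1 + b * x ^ 2) ^ (1-p)) atBot (𝓝 0) := by
    have h := htop.comp tendsto_neg_atBot_atTop
    have heq : (fun x : ℝ => x * (1 + b * x ^ 2) ^ (1-p)) =
        fun x => -((fun y : ℝ => y * (1 + b * y ^ 2) ^ (1-p)) (-x)) := by
      funext x; simp [neg_mul]
    rw [heq]
    simpa using h.neg
  have hint := MeasureTheory.integral_of_hasDerivAt_of_tendsto hderiv
    (hIA.sub hIB) hbot htop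
  rw [sub_zero] at hint
  rw [MeasureTheory.integral_sub hIA hIB] at hint
  have hAval : ∫ x : ℝ, A x = (∫ x : ℝ, (1 + b * x ^ 2) ^ (-p)) +
      b * ∫ x : ℝ, x ^ 2 * (1 + b * x ^ 2) ^ (-p) := by
    have heq : ∀ x : ℝ, A x = (1 + b * x ^ 2) ^ (-p) +
        b * (x ^ 2 * (1 + b * x ^ 2) ^ (-p)) := by
      intro x
      have hpos := pos_base b hb x
      simp only [hA]
      rw [show -(p-1) = 1 + -p by ring, Real.rpow_add hpos, Real.rpow_one]
      ring
    rw [integral_congr_ae (Eventually.of_forall heq),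
      MeasureTheory.integral_add (integrable_base b p hb (by linarith))
        ((integrable_sq b p hb hp).const_mul b),
      MeasureTheory.integral_const_mul]
  rw [hAval, MeasureTheory.integral_const_mul] at hint
  linarith [hint]

lemma I_pos (b p : ℝ) (hb : 0 < b) (hp : 3/2 < p) :
    0 < ∫ x : ℝ, (1 + b * x ^ 2) ^ (-p) := by
  rw [MeasureTheory.integral_pos_iff_support_of_nonneg_ae
    (Eventually.of_forall fun x => Real.rpow_nonneg (pos_base b hb x).le _)
    (integrable_base b p hb (by linarith))]
  have hsupp : Function.support (fun x : ℝ => (1 + b * x ^ 2) ^ (-p)) = univ :=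
    Set.eq_univ_iff_forall.mpr fun x =>
      (Real.rpow_pos_of_pos (pos_base b hb x) _).ne'
  rw [hsupp]
  simp [Real.volume_univ]

noncomputable def betaFn (a b : ℝ) : ℝ := Real.Gamma a * Real.Gamma b / Real.Gamma (a + b)

theorem stmt_5 (σ κ : ℝ) (hσ : 0 < σ) (hκ : 0 < κ)
    (f : ℝ → ℝ)
    (hf : ∀ x, f x = (Real.sqrt κ / (σ * betaFn (1 / (2 * κ)) (1 / 2))) *
        (1 + κ * x ^ 2 / σ ^ 2) ^ (-(1 + κ) / (2 * κ))) :
    (∫ x : ℝ, x ^ 2 * f x ^ 3) / (∫ x : ℝ, f x ^ 3) = σ ^ 2 / 3 := by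
  set b : ℝ := κ / σ ^ 2 with hbdef
  set p : ℝ := 3 * (1 + κ) / (2 * κ) with hpdef
  have hb : 0 < b := by positivity
  have hp : 3/2 < p := by
    rw [hpdef, lt_div_iff₀ (by positivity)]
    nlinarith
  set c : ℝ := Real.sqrt κ / (σ * betaFn (1 / (2 * κ)) (1 / 2)) with hcdef
  have hbeta : 0 < betaFn (1 / (2 * κ)) (1 / 2) := by
    unfold betaFn
    have h1 : 0 < Real.Gamma (1 / (2 * κ)) := Real.Gamma_pos_of_pos (by positivity)
    have h2 : 0 < Real.Gamma (1 / 2) := Real.Gamma_pos_of_pos (by norm_num)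
    have h3 : 0 < Real.Gamma (1 / (2 * κ) + 1 / 2) := Real.Gamma_pos_of_pos (by positivity)
    positivity
  have hc : 0 < c := by
    rw [hcdef]
    have := Real.sqrt_pos.mpr hκ
    positivity
  have hfx : ∀ x : ℝ, f x ^ 3 = c ^ 3 * (1 + b * x ^ 2) ^ (-p) := by
    intro x
    have hposa : (0:ℝ) < 1 + κ * x ^ 2 / σ ^ 2 := by positivity
    rw [hf x, mul_pow, ← Real.rpow_natCast ((1 + κ * x ^ 2 / σ ^ 2) ^ (-(1 + κ) / (2 * κ))) 3,
      ← Real.rpow_mul hposa.le,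
      show 1 + κ * x ^ 2 / σ ^ 2 = 1 + b * x ^ 2 by rw [hbdef]; ring,
      show -(1 + κ) / (2 * κ) * ((3:ℕ):ℝ) = -p by rw [hpdef]; push_cast; ring]
  set J : ℝ := ∫ x : ℝ, x ^ 2 * (1 + b * x ^ 2) ^ (-p) with hJdef
  set I : ℝ := ∫ x : ℝ, (1 + b * x ^ 2) ^ (-p) with hIdef
  have hnum : ∫ x : ℝ, x ^ 2 * f x ^ 3 = c ^ 3 * J := by
    rw [hJdef, ← MeasureTheory.integral_const_mul]
    congr 1; funext x; rw [hfx x]; ring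
  have hden : ∫ x : ℝ, f x ^ 3 = c ^ 3 * I := by
    rw [hIdef, ← MeasureTheory.integral_const_mul]
    congr 1; funext x; rw [hfx x]
  rw [hnum, hden, mul_div_mul_left _ _ (pow_ne_zero 3 hc.ne')]
  have hkey : I = ((2*p-3)*b) * J := key b p hb hp
  have hIpos : 0 < I := I_pos b p hb hp
  have h3 : (2*p-3)*b = 3/σ^2 := by
    rw [hpdef, hbdef]
    field_simp
    ring
  rw [h3] at hkey
  have hJ0 : J ≠ 0 := by
    intro h
    rw [h, mul_zero] at hkey
    exact hIpos.ne' hkey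
  rw [hkey]
  field_simp
end

section
/- For the symmetric coupled Gaussian density f(x) = (1/Z)(1 + κ(x/σ)²)^{-(1+κ)/(2κ)} with σ > 0, κ > 0, the third moment of the normalized 4th-power density is zero, and the fourth moment of the normalized 5th-power density equals 3σ⁴/(5(5+2κ)). -/
open MeasureTheory Set Real Filter Topology

lemma aux_integrable (a p : ℝ) (ha : 0 < a) (m : ℕ) (hp : (m : ℝ) + 1 < 2 * p) :
    Integrable (fun x : ℝ => x ^ m * (1 + a * x ^ 2) ^ (-p)) := by
  have hp0 : 0 < p := by
    have : (0:ℝ) ≤ m := Nat.cast_nonneg m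
    linarith
  set c : ℝ := min a 1 / 2 with hc
  have hc0 : 0 < c := by
    have := lt_min ha one_pos; positivity
  have hkey : Integrable (fun x : ℝ => c ^ (-p) * (1 + ‖x‖) ^ (-(2 * p - (m:ℝ)))) :=
    (integrable_one_add_norm (E := ℝ) (by simp; linarith)).const_mul _
  refine hkey.mono' ?_ (ae_of_all _ fun x => ?_)
  · refine (Continuous.mul (continuous_pow m) ?_).aestronglyMeasurable
    refine Continuous.rpow_const (by continuity) fun x => Or.inl ?_
    positivity
  · have hb : (0:ℝ) < 1 + a * x ^ 2 := by positivity
    have habs : (0:ℝ) < 1 + |x| := by positivity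
    have hbase : c * (1 + |x|) ^ 2 ≤ 1 + a * x ^ 2 := by
      have h1 : |x| ^ 2 = x ^ 2 := sq_abs x
      have h2 : 2 * |x| ≤ 1 + x ^ 2 := by nlinarith [sq_nonneg (1 - |x|), sq_abs x]
      have h3 : c ≤ a / 2 := by rw [hc]; have := min_le_left a 1; linarith
      have h4 : c ≤ 1 / 2 := by rw [hc]; have := min_le_right a 1; linarith
      nlinarith [sq_nonneg x, abs_nonneg x]
    have hrp : (1 + a * x ^ 2) ^ (-p) ≤ (c * (1 + |x|) ^ 2) ^ (-p) :=
      Real.rpow_le_rpow_of_nonpos (by positivity) hbase (by linarith)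
    have hsplit : (c * (1 + |x|) ^ 2) ^ (-p) = c ^ (-p) * (1 + |x|) ^ ((2:ℝ) * (-p)) := by
      rw [Real.mul_rpow hc0.le (by positivity), ← Real.rpow_natCast (1 + |x|) 2,
        ← Real.rpow_mul habs.le]
      norm_num
    have hxm : |x| ^ m ≤ (1 + |x|) ^ ((m:ℝ)) := by
      rw [Real.rpow_natCast]
      exact pow_le_pow_left₀ (abs_nonneg x) (by linarith) m
    have hnorm : ‖x ^ m * (1 + a * x ^ 2) ^ (-p)‖ = |x| ^ m * (1 + a * x ^ 2) ^ (-p) := by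
      rw [norm_mul, Real.norm_eq_abs, Real.norm_eq_abs, abs_pow,
        abs_of_pos (Real.rpow_pos_of_pos hb _)]
    rw [hnorm]
    calc |x| ^ m * (1 + a * x ^ 2) ^ (-p)
        ≤ (1 + |x|) ^ ((m:ℝ)) * (c ^ (-p) * (1 + |x|) ^ ((2:ℝ) * (-p))) := by
          rw [← hsplit]
          exact mul_le_mul hxm hrp (Real.rpow_nonneg hb.le _) (by positivity)
      _ = c ^ (-p) * (1 + ‖x‖) ^ (-(2 * p - (m:ℝ))) := by
          rw [Real.norm_eq_abs, show -(2 * p - (m:ℝ)) = (m:ℝ) + 2 * (-p) by ring,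
            Real.rpow_add habs]
          ring

lemma aux_tendsto (a q : ℝ) (ha : 0 < a) (j : ℕ) (hq : (j:ℝ) + 2 * q < 0) (hq' : q ≤ 0)
    (l : Filter ℝ) (hl : Tendsto (fun x : ℝ => |x|) l atTop) :
    Tendsto (fun x : ℝ => x ^ j * (1 + a * x ^ 2) ^ q) l (𝓝 0) := by
  have hgt : Tendsto (fun x : ℝ => a ^ q * |x| ^ ((j:ℝ) + 2 * q)) l (𝓝 0) := by
    have h1 : Tendsto (fun y : ℝ => y ^ (-(-(((j:ℝ) + 2 * q))))) atTop (𝓝 0) :=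
      tendsto_rpow_neg_atTop (by linarith)
    have h2 := (h1.comp hl).const_mul (a ^ q)
    simpa using h2
  refine squeeze_zero_norm' ?_ hgt
  filter_upwards [hl.eventually_ge_atTop 1] with x hx
  have hx0 : (0:ℝ) < |x| := lt_of_lt_of_le one_pos hx
  have hxx : (0:ℝ) < a * x ^ 2 := by
    have : x ≠ 0 := by intro h; rw [h] at hx0; simp at hx0
    positivity
  have hb : (0:ℝ) < 1 + a * x ^ 2 := by positivity
  have h1 : (1 + a * x ^ 2) ^ q ≤ (a * x ^ 2) ^ q :=
    Real.rpow_le_rpow_of_nonpos hxx (by linarith) hq'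
  have h2 : (a * x ^ 2) ^ q = a ^ q * |x| ^ ((2:ℝ) * q) := by
    rw [Real.mul_rpow ha.le (sq_nonneg x), ← sq_abs, ← Real.rpow_natCast |x| 2,
      ← Real.rpow_mul (abs_nonneg x)]
    norm_num
  have hnorm : ‖x ^ j * (1 + a * x ^ 2) ^ q‖ = |x| ^ j * (1 + a * x ^ 2) ^ q := by
    rw [norm_mul, Real.norm_eq_abs, Real.norm_eq_abs, abs_pow,
      abs_of_pos (Real.rpow_pos_of_pos hb _)]
  rw [hnorm]
  calc |x| ^ j * (1 + a * x ^ 2) ^ q ≤ |x| ^ j * (a ^ q * |x| ^ ((2:ℝ) * q)) :=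
        mul_le_mul_of_nonneg_left (h1.trans_eq h2) (by positivity)
    _ = a ^ q * |x| ^ ((j:ℝ) + 2 * q) := by
        rw [Real.rpow_add hx0, ← Real.rpow_natCast |x| j]; ring

lemma aux_rec (a p : ℝ) (ha : 0 < a) (k : ℕ) (hp : (k:ℝ) + 3 < 2 * p) :
    ((k:ℝ) + 1) * (∫ x : ℝ, x ^ k * (1 + a * x ^ 2) ^ (-p))
      = a * (2 * p - 3 - (k:ℝ)) * ∫ x : ℝ, x ^ (k + 2) * (1 + a * x ^ 2) ^ (-p) := by
  have hk0 : (0:ℝ) ≤ (k:ℝ) := Nat.cast_nonneg k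
  have hp1 : 1 ≤ p := by linarith
  have I1 := aux_integrable a p ha k (by linarith)
  have I2 := aux_integrable a p ha (k + 2) (by push_cast; linarith)
  have hderiv : ∀ x : ℝ, HasDerivAt (fun x : ℝ => x ^ (k + 1) * (1 + a * x ^ 2) ^ (1 - p))
      (((k:ℝ) + 1) * (x ^ k * (1 + a * x ^ 2) ^ (-p))
        + (a * ((k:ℝ) + 3 - 2 * p)) * (x ^ (k + 2) * (1 + a * x ^ 2) ^ (-p))) x := by
    intro x
    have hb : (0:ℝ) < 1 + a * x ^ 2 := by positivity
    have h1 : HasDerivAt (fun x : ℝ => x ^ (k + 1)) (((k:ℝ) + 1) * x ^ k) x := by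
      simpa using hasDerivAt_pow (k + 1) x
    have hb' : HasDerivAt (fun x : ℝ => 1 + a * x ^ 2) (a * (2 * x)) x := by
      simpa using ((hasDerivAt_pow 2 x).const_mul a).const_add 1
    have h2 : HasDerivAt (fun x : ℝ => (1 + a * x ^ 2) ^ (1 - p))
        (a * (2 * x) * (1 - p) * (1 + a * x ^ 2) ^ (1 - p - 1)) x :=
      hb'.rpow_const (Or.inl hb.ne')
    have h3 := h1.mul h2
    refine h3.congr_deriv ?_
    have e1 : (1 + a * x ^ 2) ^ (1 - p) = (1 + a * x ^ 2) * (1 + a * x ^ 2) ^ (-p) := by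
      rw [show (1:ℝ) - p = 1 + -p by ring, Real.rpow_add hb, Real.rpow_one]
    have e2 : (1 + a * x ^ 2) ^ (1 - p - 1) = (1 + a * x ^ 2) ^ (-p) := by
      rw [show (1:ℝ) - p - 1 = -p by ring]
    rw [e1, e2]
    push_cast
    ring
  have hint : Integrable (fun x : ℝ => ((k:ℝ) + 1) * (x ^ k * (1 + a * x ^ 2) ^ (-p))
      + (a * ((k:ℝ) + 3 - 2 * p)) * (x ^ (k + 2) * (1 + a * x ^ 2) ^ (-p))) :=
    (I1.const_mul _).add (I2.const_mul _)
  have htop := aux_tendsto a (1 - p) ha (k + 1) (by push_cast; linarith) (by linarith)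
    atTop tendsto_abs_atTop_atTop
  have hbot := aux_tendsto a (1 - p) ha (k + 1) (by push_cast; linarith) (by linarith)
    atBot tendsto_abs_atBot_atTop
  have h0 := integral_of_hasDerivAt_of_tendsto hderiv hint hbot htop
  rw [integral_add (I1.const_mul _) (I2.const_mul _), integral_const_mul,
    integral_const_mul] at h0
  linear_combination h0

lemma aux_pos (a p : ℝ) (ha : 0 < a) (hp : 1 < 2 * p) :
    0 < ∫ x : ℝ, (1 + a * x ^ 2) ^ (-p) := by
  have hint : Integrable (fun x : ℝ => (1 + a * x ^ 2) ^ (-p)) := by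
    have := aux_integrable a p ha 0 (by push_cast; linarith)
    simpa using this
  rw [integral_pos_iff_support_of_nonneg (fun x => Real.rpow_nonneg (by positivity) _) hint]
  have hs : Function.support (fun x : ℝ => (1 + a * x ^ 2) ^ (-p)) = Set.univ := by
    ext x
    simp only [Function.mem_support, Set.mem_univ, iff_true]
    exact (Real.rpow_pos_of_pos (by positivity) _).ne'
  rw [hs]
  simp

theorem stmt_6 (σ κ : ℝ) (hσ : 0 < σ) (hκ : 0 < κ)
    (f : ℝ → ℝ)
    (hf : ∀ x, f x = (Real.sqrt κ / (σ * betaFn (1 / (2 * κ)) (1 / 2))) *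
        (1 + κ * x ^ 2 / σ ^ 2) ^ (-(1 + κ) / (2 * κ))) :
    (∫ x : ℝ, x ^ 3 * f x ^ 4) / (∫ x : ℝ, f x ^ 4) = 0 ∧
    (∫ x : ℝ, x ^ 4 * f x ^ 5) / (∫ x : ℝ, f x ^ 5) = 3 * σ ^ 4 / (5 * (5 + 2 * κ)) := by
  constructor
  · -- odd integrand
    have heven : ∀ x : ℝ, f (-x) = f x := by
      intro x; rw [hf, hf, neg_sq]
    have h1 : (∫ x : ℝ, x ^ 3 * f x ^ 4) = ∫ x : ℝ, (-x) ^ 3 * f (-x) ^ 4 :=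
      (integral_neg_eq_self (fun x : ℝ => x ^ 3 * f x ^ 4) volume).symm
    have h2 : (∫ x : ℝ, (-x) ^ 3 * f (-x) ^ 4) = - ∫ x : ℝ, x ^ 3 * f x ^ 4 := by
      rw [← integral_neg]
      congr 1
      ext x
      rw [heven]
      ring
    have : (∫ x : ℝ, x ^ 3 * f x ^ 4) = 0 := by linarith [h1.trans h2]
    rw [this, zero_div]
  · set a : ℝ := κ / σ ^ 2 with haa
    set p : ℝ := 5 * (1 + κ) / (2 * κ) with hpp
    have ha : 0 < a := by positivity
    have h2p : 2 * p = 5 + 5 / κ := by rw [hpp]; field_simp; ring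
    have h2p5 : 5 < 2 * p := by
      have h5 : 0 < 5 / κ := by positivity
      rw [h2p]; linarith
    have hC : 0 < Real.sqrt κ / (σ * betaFn (1 / (2 * κ)) (1 / 2)) := by
      have hb : 0 < betaFn (1 / (2 * κ)) (1 / 2) := by
        unfold betaFn
        have g1 : 0 < Real.Gamma (1 / (2 * κ)) := Real.Gamma_pos_of_pos (by positivity)
        have g2 : 0 < Real.Gamma (1 / 2) := Real.Gamma_pos_of_pos (by norm_num)
        have g3 : 0 < Real.Gamma (1 / (2 * κ) + 1 / 2) := Real.Gamma_pos_of_pos (by positivity)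
        positivity
      positivity
    set C : ℝ := Real.sqrt κ / (σ * betaFn (1 / (2 * κ)) (1 / 2)) with hCC
    have hf5 : ∀ x : ℝ, f x ^ 5 = C ^ 5 * (1 + a * x ^ 2) ^ (-p) := by
      intro x
      rw [hf, mul_pow]
      congr 1
      have hb : (0:ℝ) ≤ 1 + κ * x ^ 2 / σ ^ 2 := by positivity
      rw [← Real.rpow_natCast ((1 + κ * x ^ 2 / σ ^ 2) ^ (-(1 + κ) / (2 * κ))) 5,
        ← Real.rpow_mul hb]
      have e1 : 1 + κ * x ^ 2 / σ ^ 2 = 1 + a * x ^ 2 := by rw [haa]; ring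
      have e2 : -(1 + κ) / (2 * κ) * (5:ℕ) = -p := by
        rw [hpp]; push_cast; field_simp
      rw [e1, e2]
    have hnum : (∫ x : ℝ, x ^ 4 * f x ^ 5) = C ^ 5 * ∫ x : ℝ, x ^ 4 * (1 + a * x ^ 2) ^ (-p) := by
      rw [← integral_const_mul]
      congr 1; ext x; rw [hf5]; ring
    have hden : (∫ x : ℝ, f x ^ 5) = C ^ 5 * ∫ x : ℝ, (1 + a * x ^ 2) ^ (-p) := by
      rw [← integral_const_mul]
      congr 1; ext x; rw [hf5]
    set I0 : ℝ := ∫ x : ℝ, (1 + a * x ^ 2) ^ (-p) with hI0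
    set I2 : ℝ := ∫ x : ℝ, x ^ 2 * (1 + a * x ^ 2) ^ (-p) with hI2
    set I4 : ℝ := ∫ x : ℝ, x ^ 4 * (1 + a * x ^ 2) ^ (-p) with hI4
    have rec1 : I0 = a * (2 * p - 3) * I2 := by
      have h := aux_rec a p ha 0 (by norm_num; linarith)
      simp only [Nat.cast_zero, pow_zero, one_mul, zero_add, sub_zero] at h
      rw [← hI0, ← hI2] at h
      linear_combination h
    have rec2 : 3 * I2 = a * (2 * p - 5) * I4 := by
      have h := aux_rec a p ha 2 (by push_cast; linarith)
      norm_num at h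
      rw [← hI2, ← hI4] at h
      linear_combination h
    have hI0pos : 0 < I0 := aux_pos a p ha (by linarith)
    have ha3 : 0 < 2 * p - 3 := by linarith
    have ha5 : 0 < 2 * p - 5 := by linarith
    have hI4eq : I0 = a ^ 2 * (2 * p - 3) * (2 * p - 5) / 3 * I4 := by
      have hI2eq : I2 = a * (2 * p - 5) * I4 / 3 := by linarith
      rw [rec1, hI2eq]; ring
    rw [hnum, hden, mul_div_mul_left _ _ (by positivity : C ^ 5 ≠ 0)]
    have hcne : a ^ 2 * (2 * p - 3) * (2 * p - 5) / 3 ≠ 0 := by positivity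
    have hI4v : I4 = I0 / (a ^ 2 * (2 * p - 3) * (2 * p - 5) / 3) := by
      field_simp
      linarith [hI4eq]
    have key : I4 / I0 = 3 / (a ^ 2 * (2 * p - 3) * (2 * p - 5)) := by
      have h1 : I0 ≠ 0 := hI0pos.ne'
      have h2 : a ≠ 0 := ha.ne'
      have h3 : 2 * p - 3 ≠ 0 := ha3.ne'
      have h4 : 2 * p - 5 ≠ 0 := ha5.ne'
      rw [hI4v]
      field_simp
    have hσ' : σ ≠ 0 := hσ.ne'
    have hκ' : κ ≠ 0 := hκ.ne'
    have hd : a ^ 2 * (2 * p - 3) * (2 * p - 5) = 5 * (5 + 2 * κ) / σ ^ 4 := by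
      rw [haa, hpp]
      field_simp
      ring
    rw [key, hd, div_div_eq_mul_div]
end

section
/- For the coupled Gaussian density f(x) = C(1 + κ x²/σ²)^{-(1+κ)/(2κ)} with σ, κ > 0, the zeros of the third derivative f⁽³⁾ on x ≠ 0 occur exactly at x = ±σ√3/√(1+2κ). -/
open Real

theorem stmt_13 (σ κ C : ℝ) (hσ : 0 < σ) (hκ : 0 < κ) (hC : 0 < C)
    (f : ℝ → ℝ)
    (hf : ∀ x, f x = C * (1 + κ * x ^ 2 / σ ^ 2) ^ (-(1 + κ) / (2 * κ))) :
    ∀ x : ℝ, x ≠ 0 → (iteratedDeriv 3 f x = 0 ↔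
      (x = σ * Real.sqrt 3 / Real.sqrt (1 + 2 * κ) ∨
        x = -(σ * Real.sqrt 3 / Real.sqrt (1 + 2 * κ)))) := by
  intro x hx
  have h2κ : (0:ℝ) < 2 * κ := by positivity
  have hσ2 : (0:ℝ) < σ ^ 2 := by positivity
  set p : ℝ := -(1 + κ) / (2 * κ) with hp
  have hplt : p < 0 := by
    rw [hp]
    apply div_neg_of_neg_of_pos _ h2κ
    nlinarith
  set a : ℝ := 2 * κ / σ ^ 2 with ha
  have hapos : 0 < a := by rw [ha]; positivity
  set g : ℝ → ℝ := fun y => 1 + κ * y ^ 2 / σ ^ 2 with hgdef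
  have hgpos : ∀ y, 0 < g y := by
    intro y; rw [hgdef]; positivity
  have hfe : f = fun y => C * g y ^ p := by
    funext y; rw [hf y]
  subst hfe
  have hg' : ∀ y, HasDerivAt g (a * y) y := by
    intro y
    have h1 : HasDerivAt (fun y : ℝ => 1 + κ * y ^ 2 / σ ^ 2) (κ * (2 * y) / σ ^ 2) y := by
      simpa using (((hasDerivAt_pow 2 y).const_mul κ).div_const (σ ^ 2)).const_add 1
    rw [hgdef]
    convert h1 using 1
    rw [ha]; ring
  have hr : ∀ (q : ℝ) (y : ℝ), HasDerivAt (fun z => g z ^ q) (q * g y ^ (q - 1) * (a * y)) y := by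
    intro q y
    have h1 : HasDerivAt (fun t : ℝ => t ^ q) (q * g y ^ (q - 1)) (g y) :=
      Real.hasDerivAt_rpow_const (Or.inl (hgpos y).ne')
    exact h1.comp y (hg' y)
  -- first derivative
  have D1 : ∀ y, HasDerivAt (fun z => C * g z ^ p) (C * p * a * (g y ^ (p - 1) * y)) y := by
    intro y
    have h1 := (hr p y).const_mul C
    refine h1.congr_deriv ?_
    generalize g y ^ (p - 1) = A
    ring
  -- second derivative
  have D2 : ∀ y, HasDerivAt (fun z => C * p * a * (g z ^ (p - 1) * z))
      (C * p * a * ((p - 1) * a * (g y ^ (p - 2) * y ^ 2) + g y ^ (p - 1))) y := by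
    intro y
    have h1 := ((hr (p - 1) y).mul (hasDerivAt_id y)).const_mul (C * p * a)
    refine h1.congr_deriv ?_
    have : p - 1 - 1 = p - 2 := by ring
    rw [this]
    simp only [id_eq]
    generalize g y ^ (p - 2) = A
    generalize g y ^ (p - 1) = B
    ring
  -- third derivative
  have D3 : HasDerivAt (fun z => C * p * a * ((p - 1) * a * (g z ^ (p - 2) * z ^ 2) + g z ^ (p - 1)))
      (C * p * a * ((p - 1) * a * ((p - 2) * g x ^ (p - 3) * (a * x) * x ^ 2
        + g x ^ (p - 2) * (2 * x)) + (p - 1) * g x ^ (p - 2) * (a * x))) x := by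
    have h1 := (((hr (p - 2) x).mul (hasDerivAt_pow 2 x)).const_mul ((p - 1) * a)).add
      (hr (p - 1) x)
    have h2 := h1.const_mul (C * p * a)
    refine h2.congr_deriv ?_
    have e1 : p - 2 - 1 = p - 3 := by ring
    have e2 : p - 1 - 1 = p - 2 := by ring
    rw [e1, e2]
    generalize g x ^ (p - 3) = A
    generalize g x ^ (p - 2) = B
    push_cast
    ring
  have hd1 : deriv (fun z => C * g z ^ p) = fun z => C * p * a * (g z ^ (p - 1) * z) :=
    funext fun y => (D1 y).deriv
  have hd2 : deriv (fun z => C * p * a * (g z ^ (p - 1) * z))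
      = fun z => C * p * a * ((p - 1) * a * (g z ^ (p - 2) * z ^ 2) + g z ^ (p - 1)) :=
    funext fun y => (D2 y).deriv
  have hIter : iteratedDeriv 3 (fun z => C * g z ^ p) x
      = C * p * a * ((p - 1) * a * ((p - 2) * g x ^ (p - 3) * (a * x) * x ^ 2
        + g x ^ (p - 2) * (2 * x)) + (p - 1) * g x ^ (p - 2) * (a * x)) := by
    rw [show (3:ℕ) = 2 + 1 from rfl, iteratedDeriv_succ,
      iteratedDeriv_succ, iteratedDeriv_one, hd1, hd2]
    exact D3.deriv
  -- factor the third derivative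
  have hsub : g x ^ (p - 2) = g x ^ (p - 3) * g x := by
    rw [show p - 2 = (p - 3) + 1 by ring, Real.rpow_add (hgpos x), Real.rpow_one]
  have hfac : C * p * a * ((p - 1) * a * ((p - 2) * g x ^ (p - 3) * (a * x) * x ^ 2
        + g x ^ (p - 2) * (2 * x)) + (p - 1) * g x ^ (p - 2) * (a * x))
      = (C * p * (a * a) * (p - 1) * x * g x ^ (p - 3)) * ((p - 2) * a * x ^ 2 + 3 * g x) := by
    rw [hsub]
    generalize g x ^ (p - 3) = A
    generalize g x = G
    ring
  have hKne : C * p * (a * a) * (p - 1) * x * g x ^ (p - 3) ≠ 0 := by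
    have h1 : g x ^ (p - 3) ≠ 0 := (Real.rpow_pos_of_pos (hgpos x) _).ne'
    have hp1 : p - 1 ≠ 0 := by linarith
    have : C * p * (a * a) * (p - 1) * x ≠ 0 :=
      mul_ne_zero (mul_ne_zero (mul_ne_zero (mul_ne_zero hC.ne' hplt.ne)
        (mul_ne_zero hapos.ne' hapos.ne')) hp1) hx
    exact mul_ne_zero this h1
  -- the inner factor
  have hinner : (p - 2) * a * x ^ 2 + 3 * g x = (3 * σ ^ 2 - (1 + 2 * κ) * x ^ 2) / σ ^ 2 := by
    rw [hp, ha, hgdef]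
    field_simp
    ring
  have hsqκ : (0:ℝ) < 1 + 2 * κ := by linarith
  have hr2 : (σ * Real.sqrt 3 / Real.sqrt (1 + 2 * κ)) ^ 2 = 3 * σ ^ 2 / (1 + 2 * κ) := by
    rw [div_pow, mul_pow, sq_sqrt (by norm_num : (3:ℝ) ≥ 0), sq_sqrt hsqκ.le]
    ring
  rw [hIter, hfac, mul_eq_zero]
  constructor
  · rintro (h | h)
    · exact absurd h hKne
    · rw [hinner, div_eq_zero_iff] at h
      rcases h with h | h
      · have hx2 : x ^ 2 = (σ * Real.sqrt 3 / Real.sqrt (1 + 2 * κ)) ^ 2 := by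
          rw [hr2]; field_simp; linarith
        exact sq_eq_sq_iff_eq_or_eq_neg.mp hx2
      · exact absurd h hσ2.ne'
  · intro h
    right
    rw [hinner, div_eq_zero_iff]
    left
    have hx2 : x ^ 2 = 3 * σ ^ 2 / (1 + 2 * κ) := by
      rcases h with h | h <;> rw [h]
      · exact hr2
      · rw [neg_pow, hr2]; ring
    rw [hx2]; field_simp; ring
end

section
/- For σ > 0 and κ > 0, the normalized coupled Gaussian density satisfies the generalized-mean identity at the scale: f(σ) = (∫_{-∞}^∞ f(x)^{1+2κ/(1+κ)} dx)^{(1+κ)/(2κ)}, where f(x) = (√κ/(σ B(1/(2κ),1/2)))(1 + κ x²/σ²)^{-(1+κ)/(2κ)}. -/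
open MeasureTheory Real

open Set

lemma betaFn_eq_integral {a b : ℝ} (ha : 0 < a) (hb : 0 < b) :
    ∫ x in (0:ℝ)..1, x ^ (a - 1) * (1 - x) ^ (b - 1) = betaFn a b := by
  have hcb : ((∫ x in (0:ℝ)..1, x ^ (a - 1) * (1 - x) ^ (b - 1) : ℝ) : ℂ)
      = Complex.betaIntegral a b := by
    rw [← intervalIntegral.integral_ofReal, Complex.betaIntegral]
    apply intervalIntegral.integral_congr
    intro x hx
    rw [uIcc_of_le (by norm_num)] at hx
    obtain ⟨h0, h1⟩ := hx
    push_cast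
    rw [Complex.ofReal_cpow h0, Complex.ofReal_cpow (by linarith)]
    push_cast
    ring
  have hG := Complex.Gamma_mul_Gamma_eq_betaIntegral
    (s := (a:ℂ)) (t := (b:ℂ)) (by simpa using ha) (by simpa using hb)
  rw [← hcb] at hG
  have hab : Real.Gamma (a + b) ≠ 0 := (Real.Gamma_pos_of_pos (by linarith)).ne'
  have : (Real.Gamma a * Real.Gamma b : ℂ)
      = (Real.Gamma (a + b) : ℂ) * ((∫ x in (0:ℝ)..1, x ^ (a - 1) * (1 - x) ^ (b - 1) : ℝ) : ℂ) := by
    rw [← Complex.Gamma_ofReal, ← Complex.Gamma_ofReal, ← Complex.Gamma_ofReal] at *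
    push_cast
    rw [hG]
  have h2 : Real.Gamma a * Real.Gamma b
      = Real.Gamma (a + b) * ∫ x in (0:ℝ)..1, x ^ (a - 1) * (1 - x) ^ (b - 1) := by
    exact_mod_cast this
  rw [betaFn, h2]
  field_simp

lemma image_phi : (fun x : ℝ => x ^ 2 / (1 + x ^ 2)) '' Ioi 0 = Ioo 0 1 := by
  ext t
  constructor
  · rintro ⟨x, hx, rfl⟩
    have hx0 : (0:ℝ) < x := hx
    have hu : (0:ℝ) < 1 + x ^ 2 := by positivity
    constructor
    · positivity
    · rw [div_lt_one hu]; linarith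
  · rintro ⟨ht0, ht1⟩
    refine ⟨Real.sqrt (t / (1 - t)), ?_, ?_⟩
    · have : (0:ℝ) < t / (1 - t) := by
        apply div_pos ht0; linarith
      exact Real.sqrt_pos.mpr this
    · have h1t : (0:ℝ) < 1 - t := by linarith
      have hsq : Real.sqrt (t / (1 - t)) ^ 2 = t / (1 - t) :=
        Real.sq_sqrt (le_of_lt (div_pos ht0 h1t))
      show Real.sqrt (t / (1 - t)) ^ 2 / (1 + Real.sqrt (t / (1 - t)) ^ 2) = t
      rw [hsq]
      field_simp; ring

lemma integral_one_add_sq_rpow (s : ℝ) :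
    ∫ x : ℝ, (1 + x ^ 2) ^ (-s) = ∫ t in (0:ℝ)..1, t ^ ((1:ℝ)/2 - 1) * (1 - t) ^ (s - 1/2 - 1) := by
  have key : ∫ t in Ioo (0:ℝ) 1, t ^ (-(1:ℝ)/2) * (1 - t) ^ (s - 3/2)
      = ∫ x in Ioi (0:ℝ), 2 * (1 + x ^ 2) ^ (-s) := by
    rw [← image_phi]
    rw [integral_image_eq_integral_abs_deriv_smul (f' := fun x => 2 * x / (1 + x ^ 2) ^ 2)
      measurableSet_Ioi ?_ ?_]
    · apply setIntegral_congr_fun measurableSet_Ioi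
      intro x hx
      have hx0 : (0:ℝ) < x := hx
      have hu : (0:ℝ) < 1 + x ^ 2 := by positivity
      have h1 : (1:ℝ) - x ^ 2 / (1 + x ^ 2) = (1 + x ^ 2)⁻¹ := by field_simp; ring
      have h2 : (x ^ 2 / (1 + x ^ 2)) ^ (-(1:ℝ)/2)
          = x⁻¹ * (1 + x ^ 2) ^ ((1:ℝ)/2) := by
        rw [div_rpow (by positivity) hu.le]
        rw [← Real.rpow_natCast x 2, ← Real.rpow_mul hx0.le]
        norm_num
        rw [Real.rpow_neg_one, Real.rpow_neg hu.le, div_inv_eq_mul]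
      have h3 : ((1 + x ^ 2)⁻¹ : ℝ) ^ (s - 3/2) = (1 + x ^ 2) ^ ((3:ℝ)/2 - s) := by
        rw [← Real.rpow_neg_one, ← Real.rpow_mul hu.le]
        ring_nf
      simp only [smul_eq_mul, h1, h2, h3]
      rw [abs_of_pos (by positivity)]
      rw [show ((1:ℝ) + x ^ 2) ^ (2:ℕ) = (1 + x ^ 2) ^ ((2:ℝ)) by
        rw [← Real.rpow_natCast _ 2]; norm_num]
      have hAB : (1 + x ^ 2 : ℝ) ^ ((1:ℝ)/2) * (1 + x ^ 2) ^ ((3:ℝ)/2 - s)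
          = (1 + x ^ 2) ^ ((2:ℝ)) * (1 + x ^ 2) ^ (-s) := by
        rw [← Real.rpow_add hu, ← Real.rpow_add hu]
        congr 1
        ring
      have hD : (0:ℝ) < (1 + x ^ 2) ^ ((2:ℝ)) := Real.rpow_pos_of_pos hu _
      rw [show x⁻¹ * (1 + x ^ 2) ^ ((1:ℝ)/2) * (1 + x ^ 2) ^ ((3:ℝ)/2 - s)
          = x⁻¹ * ((1 + x ^ 2) ^ ((1:ℝ)/2) * (1 + x ^ 2) ^ ((3:ℝ)/2 - s)) from by ring, hAB]
      field_simp
    · intro x hx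
      have hx0 : (0:ℝ) < x := hx
      have hu : (0:ℝ) < 1 + x ^ 2 := by positivity
      have hd : HasDerivAt (fun x : ℝ => 1 + x ^ 2) (2 * x) x := by
        simpa using (hasDerivAt_pow 2 x).const_add 1
      have hn : HasDerivAt (fun x : ℝ => x ^ 2) (2 * x) x := by
        simpa using hasDerivAt_pow 2 x
      have := hn.div hd hu.ne'
      have heq : (2 * x * (1 + x ^ 2) - x ^ 2 * (2 * x)) / (1 + x ^ 2) ^ 2
          = 2 * x / (1 + x ^ 2) ^ 2 := by ring_nf
      rw [heq] at this
      exact this.hasDerivWithinAt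
    · intro a ha b hb h
      simp only [mem_Ioi] at ha hb
      have hua : (0:ℝ) < 1 + a ^ 2 := by positivity
      have hub : (0:ℝ) < 1 + b ^ 2 := by positivity
      have h2 : a ^ 2 * (1 + b ^ 2) = b ^ 2 * (1 + a ^ 2) := by
        field_simp at h
        linarith [h]
      have : a ^ 2 = b ^ 2 := by nlinarith
      nlinarith
  have h2 : ∫ x : ℝ, (1 + x ^ 2) ^ (-s) = 2 * ∫ x in Ioi (0:ℝ), (1 + x ^ 2) ^ (-s) := by
    rw [← integral_comp_abs (f := fun y => (1 + y ^ 2) ^ (-s))]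
    congr 1
    funext x
    rw [sq_abs]
  rw [h2, intervalIntegral.integral_of_le (by norm_num : (0:ℝ) ≤ 1),
    MeasureTheory.integral_Ioc_eq_integral_Ioo]
  rw [show ((1:ℝ)/2 - 1 : ℝ) = -(1:ℝ)/2 by norm_num, show (s - 1/2 - 1 : ℝ) = s - 3/2 by ring,
    key, MeasureTheory.integral_const_mul]

theorem stmt_19 (σ κ : ℝ) (hσ : 0 < σ) (hκ : 0 < κ)
    (f : ℝ → ℝ)
    (hf : ∀ x, f x = (Real.sqrt κ / (σ * betaFn (1 / (2 * κ)) (1 / 2))) *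
        (1 + κ * x ^ 2 / σ ^ 2) ^ (-(1 + κ) / (2 * κ))) :
    f σ = (∫ x : ℝ, f x ^ (1 + 2 * κ / (1 + κ))) ^ ((1 + κ) / (2 * κ)) := by
  have hκ1 : (0:ℝ) < 1 + κ := by linarith
  have h2κ : (0:ℝ) < 2 * κ := by linarith
  have hsk : (0:ℝ) < Real.sqrt κ := Real.sqrt_pos.mpr hκ
  set B1 : ℝ := betaFn (1 / (2 * κ)) (1 / 2) with hB1def
  have hB1 : 0 < B1 := by
    rw [hB1def, betaFn]
    have h1 : (0:ℝ) < 1 / (2 * κ) := by positivity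
    exact div_pos (mul_pos (Real.Gamma_pos_of_pos h1) (Real.Gamma_pos_of_pos (by norm_num)))
      (Real.Gamma_pos_of_pos (by linarith))
  set C : ℝ := Real.sqrt κ / (σ * B1) with hCdef
  have hC : 0 < C := by rw [hCdef]; positivity
  set s : ℝ := (1 + 3 * κ) / (2 * κ) with hsdef
  set p : ℝ := 1 + 2 * κ / (1 + κ) with hpdef
  set e : ℝ := (1 + κ) / (2 * κ) with hedef
  have hpt : ∀ x : ℝ, f x ^ p = C ^ p * (1 + κ * x ^ 2 / σ ^ 2) ^ (-s) := by
    intro x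
    rw [hf x]
    have hu : (0:ℝ) < 1 + κ * x ^ 2 / σ ^ 2 := by positivity
    rw [Real.mul_rpow hC.le (Real.rpow_nonneg hu.le _), ← Real.rpow_mul hu.le]
    rw [show (-(1 + κ) / (2 * κ)) * p = -s from by
      rw [hpdef, hsdef]; field_simp; ring]
  have hbeta : ∫ x : ℝ, (1 + x ^ 2) ^ (-s) = betaFn (1/2) (s - 1/2) := by
    rw [integral_one_add_sq_rpow s]
    refine betaFn_eq_integral (by norm_num) ?_
    have h : (1:ℝ)/2 < s := by rw [hsdef, lt_div_iff₀ h2κ]; linarith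
    linarith
  have hscale : ∫ x : ℝ, (1 + κ * x ^ 2 / σ ^ 2) ^ (-s)
      = (σ / Real.sqrt κ) * betaFn (1/2) (s - 1/2) := by
    have hcomp : ∀ x : ℝ, (1 + κ * x ^ 2 / σ ^ 2 : ℝ)
        = 1 + (Real.sqrt κ / σ * x) ^ 2 := by
      intro x
      rw [mul_pow, div_pow, Real.sq_sqrt hκ.le]
      ring
    calc ∫ x : ℝ, (1 + κ * x ^ 2 / σ ^ 2) ^ (-s)
        = ∫ x : ℝ, (fun y => (1 + y ^ 2) ^ (-s)) (Real.sqrt κ / σ * x) := by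
          congr 1
          funext x
          simp only
          rw [hcomp x]
      _ = |(Real.sqrt κ / σ)⁻¹| • ∫ y : ℝ, (1 + y ^ 2) ^ (-s) :=
          Measure.integral_comp_mul_left (fun y => (1 + y ^ 2) ^ (-s)) (Real.sqrt κ / σ)
      _ = (σ / Real.sqrt κ) * betaFn (1/2) (s - 1/2) := by
          rw [hbeta, inv_div, abs_of_pos (by positivity), smul_eq_mul]
  have hB2 : betaFn (1/2) (s - 1/2) = B1 / (1 + κ) := by
    have hs12 : s - 1/2 = 1 / (2 * κ) + 1 := by
      rw [hsdef]
      field_simp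
      ring
    have hg2 : Real.Gamma (1 / (2 * κ) + 1 / 2) ≠ 0 :=
      (Real.Gamma_pos_of_pos (by positivity)).ne'
    have hg1 : Real.Gamma (1 / (2 * κ)) ≠ 0 :=
      (Real.Gamma_pos_of_pos (by positivity)).ne'
    rw [hs12, betaFn, hB1def, betaFn]
    rw [Real.Gamma_add_one (by positivity : (1:ℝ) / (2 * κ) ≠ 0)]
    rw [show (1:ℝ)/2 + (1 / (2 * κ) + 1) = (1 / (2 * κ) + 1 / 2) + 1 by ring]
    rw [Real.Gamma_add_one (by positivity : (1:ℝ) / (2 * κ) + 1 / 2 ≠ 0)]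
    rw [show (1:ℝ) / (2 * κ) + 1 / 2 = (1 + κ) / (2 * κ) by field_simp]
    field_simp
  have hint : ∫ x : ℝ, f x ^ p = C ^ p * ((σ / Real.sqrt κ) * (B1 / (1 + κ))) := by
    simp_rw [hpt]
    rw [MeasureTheory.integral_const_mul, hscale, hB2]
  rw [hint, hf σ]
  have hσκ : κ * σ ^ 2 / σ ^ 2 = κ := by field_simp
  rw [hσκ]
  have h1 : C * (σ / Real.sqrt κ * B1) = 1 := by
    rw [hCdef]
    field_simp
  have h2 : C ^ p = C ^ (p - 1) * C := by
    nth_rewrite 1 [show p = (p - 1) + 1 by ring]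
    rw [Real.rpow_add_one hC.ne']
  have hinner : C ^ p * ((σ / Real.sqrt κ) * (B1 / (1 + κ)))
      = C ^ (p - 1) * (1 + κ)⁻¹ := by
    rw [h2]
    rw [show C ^ (p - 1) * C * (σ / Real.sqrt κ * (B1 / (1 + κ)))
        = C ^ (p - 1) * (C * (σ / Real.sqrt κ * B1)) * (1 + κ)⁻¹ by ring, h1]
    ring
  rw [hinner]
  rw [Real.mul_rpow (Real.rpow_nonneg hC.le _) (inv_nonneg.mpr hκ1.le)]
  rw [← Real.rpow_mul hC.le]
  rw [show (p - 1) * e = 1 by rw [hpdef, hedef]; field_simp; ring, Real.rpow_one]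
  rw [← Real.rpow_neg_one (1 + κ), ← Real.rpow_mul hκ1.le]
  congr 1
  rw [hedef]
  ring
end
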